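/- Let f ∈ K[X] split over K with distinct roots u₁, ..., uₙ where n ≥ 2, and let 0 ≤ k ≤ n - 2. Then Σᵢ uᵢᵏ / f'(uᵢ) = 0. -/

import Mathlib

open Polynomial Lagrange Finset

theorem power_sum_over_derivative_eq_zero {K : Type*} [Field K] [DecidableEq K]
    (f : K[X]) (hsep : f.Separable) (hsplit : (f.map (RingHom.id K)).Splits)
    (hdeg : 2 ≤ f.natDegree) (k : ℕ) (hk : k ≤ f.natDegree - 2) :
    ∑ u ∈ f.roots.toFinset, u ^ k / f.derivative.eval u = 0 := by
  set s : Finset K := f.roots.toFinset with hs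
  have hnodup : f.roots.Nodup := nodup_roots hsep
  have hcard : s.card = f.natDegree := by
    rw [hs, Multiset.toFinset_card_of_nodup hnodup,
      (splits_iff_card_roots (f := f)).mp (by simpa using hsplit)]
  have hval : s.val = f.roots := by
    rw [hs, Multiset.toFinset_val, Multiset.dedup_eq_self.mpr hnodup]
  set c := f.leadingCoeff with hc
  have hf0 : f ≠ 0 := fun h => by simp [h] at hdeg
  have hcne : c ≠ 0 := leadingCoeff_ne_zero.mpr hf0
  -- f = C c * nodal s id
  have hfeq : f = C c * nodal s id := by
    rw [nodal_eq]
    conv_lhs => rw [(by simpa using hsplit : f.Splits).eq_prod_roots]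
    congr 1
    rw [← hval]
    rfl
  -- derivative eval
  have hderiv : ∀ u ∈ s, f.derivative.eval u = c * (nodal s (id : K → K)).derivative.eval u := by
    intro u hu
    rw [hfeq, derivative_mul, derivative_C, zero_mul, zero_add, eval_mul, eval_C]
  -- nodalWeight relation
  have hw : ∀ u ∈ s, nodalWeight s id u = ((nodal s (id : K → K)).derivative.eval u)⁻¹ := by
    intro u hu
    exact nodalWeight_eq_eval_derivative_nodal hu
  have hinj : Set.InjOn (id : K → K) s := fun a _ b _ h => h
  -- X^k = interpolate
  have hXk : (X : K[X]) ^ k = interpolate s id (fun x => x ^ k) := by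
    refine eq_interpolate_of_eval_eq (r := fun x => x ^ k) hinj ?_ ?_
    · rw [degree_X_pow, hcard]
      exact_mod_cast lt_of_le_of_lt hk (by omega)
    · intro i _; simp
  -- take coeff at s.card - 1
  have hcoeff : ((X : K[X]) ^ k).coeff (s.card - 1) = 0 := by
    rw [coeff_X_pow, if_neg]; omega
  rw [hXk] at hcoeff
  have hsum : ∑ u ∈ s, u ^ k * nodalWeight s id u = 0 := by
    rw [← hcoeff, interpolate_apply, finset_sum_coeff]
    refine Finset.sum_congr rfl fun i hi => ?_
    have hb : Lagrange.basis s id i = C (nodalWeight s id i) * nodal (s.erase i) id := by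
      rw [basis_eq_prod_sub_inv_mul_nodal_div hi, nodal_erase_eq_nodal_div hi]
    rw [coeff_C_mul, hb, coeff_C_mul]
    have hmonic : (nodal (s.erase i) (id : K → K)).Monic := nodal_monic
    have hnd : (nodal (s.erase i) (id : K → K)).natDegree = s.card - 1 := by
      rw [natDegree_nodal, card_erase_of_mem hi]
    have : (nodal (s.erase i) (id : K → K)).coeff (s.card - 1) = 1 := by
      rw [← hnd]; exact hmonic.coeff_natDegree
    rw [this]
    ring
  calc ∑ u ∈ s, u ^ k / f.derivative.eval u
      = ∑ u ∈ s, c⁻¹ * (u ^ k * nodalWeight s id u) := by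
        refine Finset.sum_congr rfl fun u hu => ?_
        rw [hderiv u hu, hw u hu, div_eq_mul_inv, mul_inv]
        ring
    _ = c⁻¹ * ∑ u ∈ s, u ^ k * nodalWeight s id u := by rw [Finset.mul_sum]
    _ = 0 := by rw [hsum, mul_zero]
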